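/- Let r : g → h be a morphism of a graded commutative 2-ring R, and let ⟨r⟩ denote the smallest homogeneous ideal of R containing r. Then for all objects g', h' of R, a morphism f : g' → h' belongs to ⟨r⟩ if and only if f = s ∘ (id_ℓ ⊗ r) ∘ u for some object ℓ of R, some isomorphism u : g' ≅ ℓ ⊗ g and some morphism s : ℓ ⊗ h → h'; and this holds if and only if f = v ∘ (r ⊗ id_k) ∘ t for some object k of R, some morphism t : g' → g ⊗ k and some isomorphism v : h ⊗ k ≅ h'. -/

import Mathlib

open CategoryTheory CategoryTheory.Limits CategoryTheory.MonoidalCategory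

universe w v u v' u' v'' u''

/-- A *graded commutative 2-ring*: an essentially small preadditive symmetric monoidal
category whose tensor product is additive in each variable and in which every object
is invertible for the tensor product. -/
class GradedComm2Ring (C : Type u) [Category.{v} C] [Preadditive C] [MonoidalCategory C]
    [SymmetricCategory C] [MonoidalPreadditive C] : Prop where
  essentiallySmall : EssentiallySmall.{v} C
  invertible : ∀ g : C, ∃ g' : C, Nonempty (g ⊗ g' ≅ 𝟙_ C)
section IdealDef

variable (C : Type u) [Category.{v} C] [Preadditive C] [MonoidalCategory C]

/-- A *homogeneous ideal* of a graded commutative 2-ring: a family of subgroups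
`I(g,h) ⊆ Hom(g,h)` closed under composition with arbitrary morphisms on either side
and under tensoring with arbitrary morphisms on either side. -/
structure HomIdeal where
  carrier : ∀ g h : C, AddSubgroup (g ⟶ h)
  comp_left : ∀ {g h h' : C} (r : g ⟶ h) (s : h ⟶ h'),
      r ∈ carrier g h → r ≫ s ∈ carrier g h'
  comp_right : ∀ {g' g h : C} (t : g' ⟶ g) (r : g ⟶ h),
      r ∈ carrier g h → t ≫ r ∈ carrier g' h
  tensor_left : ∀ {g h g' h' : C} (s : g' ⟶ h') (r : g ⟶ h),
      r ∈ carrier g h → (s ⊗ₘ r) ∈ carrier (g' ⊗ g) (h' ⊗ h)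
  tensor_right : ∀ {g h g' h' : C} (r : g ⟶ h) (s : g' ⟶ h'),
      r ∈ carrier g h → (r ⊗ₘ s) ∈ carrier (g ⊗ g') (h ⊗ h')

variable {C}

namespace HomIdeal

instance : PartialOrder (HomIdeal C) where
  le I J := ∀ g h : C, I.carrier g h ≤ J.carrier g h
  le_refl I g h := le_rfl
  le_trans I J K h₁ h₂ g h := (h₁ g h).trans (h₂ g h)
  le_antisymm I J h₁ h₂ := by
    cases I; cases J
    congr
    funext g h
    exact le_antisymm (h₁ g h) (h₂ g h)

/-- A homogeneous ideal is *proper* if it contains no identity morphism. -/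
def IsProper (I : HomIdeal C) : Prop := ∀ g : C, 𝟙 g ∉ I.carrier g g

/-- A proper homogeneous ideal is *prime* if whenever a composite belongs to it, one
of the factors belongs to it. -/
structure IsPrime (I : HomIdeal C) : Prop where
  isProper : I.IsProper
  mem_or_mem : ∀ {g h l : C} (r : g ⟶ h) (s : h ⟶ l),
      r ≫ s ∈ I.carrier g l → r ∈ I.carrier g h ∨ s ∈ I.carrier h l

end HomIdeal

end IdealDef

section
variable {C : Type u} [Category.{v} C] [Preadditive C] [MonoidalCategory C]

/-- Membership in the smallest homogeneous ideal containing the morphism `r`: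
`f` belongs to every homogeneous ideal containing `r`. -/
def MemSpan {g h : C} (r : g ⟶ h) {g' h' : C} (f : g' ⟶ h') : Prop :=
  ∀ K : HomIdeal C, r ∈ K.carrier g h → f ∈ K.carrier g' h'

end

section Aux
variable {C : Type u} [Category.{v} C] [MonoidalCategory C]

lemma nat1 (g g' : C) (e : g ⊗ g' ≅ 𝟙_ C) {X Y : C} (f : X ⟶ Y) :
    f ≫ (ρ_ Y).inv ≫ Y ◁ e.inv ≫ (α_ Y g g').inv
      = (ρ_ X).inv ≫ X ◁ e.inv ≫ (α_ X g g').inv ≫ f ▷ g ▷ g' := by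
  rw [MonoidalCategory.rightUnitor_inv_naturality_assoc, ← whisker_exchange_assoc,
    MonoidalCategory.associator_inv_naturality_left]

lemma nat2 (g g' : C) (e' : g' ⊗ g ≅ 𝟙_ C) {X Y : C} (f : X ⟶ Y) :
    f ▷ g' ▷ g ≫ (α_ Y g' g).hom ≫ Y ◁ e'.hom ≫ (ρ_ Y).hom
      = (α_ X g' g).hom ≫ X ◁ e'.hom ≫ (ρ_ X).hom ≫ f := by
  rw [MonoidalCategory.associator_naturality_left_assoc, ← whisker_exchange_assoc,
    MonoidalCategory.rightUnitor_naturality]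

lemma nat3 (g g' : C) (e' : g' ⊗ g ≅ 𝟙_ C) {X Y : C} (f : X ⟶ Y) :
    f ≫ (λ_ Y).inv ≫ e'.inv ▷ Y ≫ (α_ g' g Y).hom
      = (λ_ X).inv ≫ e'.inv ▷ X ≫ (α_ g' g X).hom ≫ g' ◁ g ◁ f := by
  rw [MonoidalCategory.leftUnitor_inv_naturality_assoc, whisker_exchange_assoc,
    MonoidalCategory.associator_naturality_right]

lemma nat4 (g g' : C) (e : g ⊗ g' ≅ 𝟙_ C) {X Y : C} (f : X ⟶ Y) :
    g ◁ g' ◁ f ≫ (α_ g g' Y).inv ≫ e.hom ▷ Y ≫ (λ_ Y).hom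
      = (α_ g g' X).inv ≫ e.hom ▷ X ≫ (λ_ X).hom ≫ f := by
  rw [MonoidalCategory.associator_inv_naturality_right_assoc, whisker_exchange_assoc,
    MonoidalCategory.leftUnitor_naturality]

noncomputable def trUnit (g g' : C) (e : g ⊗ g' ≅ 𝟙_ C) :
    𝟭 C ≅ tensorRight g ⋙ tensorRight g' :=
  NatIso.ofComponents
    (fun X => (ρ_ X).symm ≪≫ whiskerLeftIso X e.symm ≪≫ (α_ X g g').symm)
    (by
      intro X Y f
      simp only [Functor.id_map, Functor.comp_map, Iso.trans_hom,
        Iso.symm_hom, whiskerLeftIso_hom, Category.assoc]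
      exact nat1 g g' e f)

noncomputable def trCounit (g g' : C) (e' : g' ⊗ g ≅ 𝟙_ C) :
    tensorRight g' ⋙ tensorRight g ≅ 𝟭 C :=
  NatIso.ofComponents
    (fun X => α_ X g' g ≪≫ whiskerLeftIso X e' ≪≫ ρ_ X)
    (by
      intro X Y f
      simp only [Functor.id_map, Functor.comp_map, Iso.trans_hom,
        whiskerLeftIso_hom, Category.assoc]
      exact nat2 g g' e' f)

/-- If `g` is invertible, tensoring on the right by `g` is an equivalence. -/
noncomputable def tensorRightEquiv (g g' : C) (e : g ⊗ g' ≅ 𝟙_ C) (e' : g' ⊗ g ≅ 𝟙_ C) :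
    C ≌ C :=
  CategoryTheory.Equivalence.mk (tensorRight g) (tensorRight g') (trUnit g g' e)
    (trCounit g g' e')

lemma exists_whiskerRight_eq (g g' : C) (e : g ⊗ g' ≅ 𝟙_ C) (e' : g' ⊗ g ≅ 𝟙_ C)
    {a b : C} (w : a ⊗ g ⟶ b ⊗ g) : ∃ w' : a ⟶ b, w' ▷ g = w := by
  haveI : (tensorRight g).Full :=
    Functor.Full.of_iso (F := (tensorRightEquiv g g' e e').functor) (Iso.refl _)
  obtain ⟨w', hw⟩ := (tensorRight g).map_surjective w
  exact ⟨w', by simpa using hw⟩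

noncomputable def tlUnit (g g' : C) (e' : g' ⊗ g ≅ 𝟙_ C) :
    𝟭 C ≅ tensorLeft g ⋙ tensorLeft g' :=
  NatIso.ofComponents
    (fun X => (λ_ X).symm ≪≫ whiskerRightIso e'.symm X ≪≫ α_ g' g X)
    (by
      intro X Y f
      simp only [Functor.id_map, Functor.comp_map, Iso.trans_hom,
        Iso.symm_hom, whiskerRightIso_hom, Category.assoc]
      exact nat3 g g' e' f)

noncomputable def tlCounit (g g' : C) (e : g ⊗ g' ≅ 𝟙_ C) :
    tensorLeft g' ⋙ tensorLeft g ≅ 𝟭 C :=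
  NatIso.ofComponents
    (fun X => (α_ g g' X).symm ≪≫ whiskerRightIso e X ≪≫ λ_ X)
    (by
      intro X Y f
      simp only [Functor.id_map, Functor.comp_map, Iso.trans_hom,
        Iso.symm_hom, whiskerRightIso_hom, Category.assoc]
      exact nat4 g g' e f)

/-- If `g` is invertible, tensoring on the left by `g` is an equivalence. -/
noncomputable def tensorLeftEquiv (g g' : C) (e : g ⊗ g' ≅ 𝟙_ C) (e' : g' ⊗ g ≅ 𝟙_ C) :
    C ≌ C :=
  CategoryTheory.Equivalence.mk (tensorLeft g) (tensorLeft g') (tlUnit g g' e')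
    (tlCounit g g' e)

lemma exists_whiskerLeft_eq (g g' : C) (e : g ⊗ g' ≅ 𝟙_ C) (e' : g' ⊗ g ≅ 𝟙_ C)
    {a b : C} (w : g ⊗ a ⟶ g ⊗ b) : ∃ w' : a ⟶ b, g ◁ w' = w := by
  haveI : (tensorLeft g).Full :=
    Functor.Full.of_iso (F := (tensorLeftEquiv g g' e e').functor) (Iso.refl _)
  obtain ⟨w', hw⟩ := (tensorLeft g).map_surjective w
  exact ⟨w', by simpa using hw⟩

end Aux

section SpanLemmas
variable {C : Type u} [Category.{v} C] [Preadditive C] [MonoidalCategory C]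
  [SymmetricCategory C] [MonoidalPreadditive C] [GradedComm2Ring C]

variable {g h : C}

/-- "Left normal form" for elements of the principal ideal generated by `r`. -/
def LF (r : g ⟶ h) {g' h' : C} (f : g' ⟶ h') : Prop :=
  ∃ (ℓ : C) (u : g' ≅ ℓ ⊗ g) (s : ℓ ⊗ h ⟶ h'), f = u.hom ≫ (ℓ ◁ r) ≫ s

/-- "Right normal form". -/
def RF (r : g ⟶ h) {g' h' : C} (f : g' ⟶ h') : Prop :=
  ∃ (k : C) (t : g' ⟶ g ⊗ k) (v : h ⊗ k ≅ h'), f = t ≫ (r ▷ k) ≫ v.hom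

lemma exists_inv (g : C) :
    ∃ g₁ : C, Nonempty (g ⊗ g₁ ≅ 𝟙_ C) ∧ Nonempty (g₁ ⊗ g ≅ 𝟙_ C) := by
  obtain ⟨g₁, ⟨e⟩⟩ := GradedComm2Ring.invertible (C := C) g
  exact ⟨g₁, ⟨e⟩, ⟨(β_ g₁ g) ≪≫ e⟩⟩

lemma exists_iso_tensorRight (g x : C) : ∃ m : C, Nonempty (x ≅ m ⊗ g) := by
  obtain ⟨g₁, ⟨e⟩, ⟨e'⟩⟩ := exists_inv g
  exact ⟨x ⊗ g₁, ⟨(ρ_ x).symm ≪≫ whiskerLeftIso x e'.symm ≪≫ (α_ x g₁ g).symm⟩⟩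

lemma exists_wr (g : C) {a b : C} (w : a ⊗ g ⟶ b ⊗ g) : ∃ w' : a ⟶ b, w' ▷ g = w := by
  obtain ⟨g₁, ⟨e⟩, ⟨e'⟩⟩ := exists_inv g
  exact exists_whiskerRight_eq g g₁ e e' w

lemma exists_wl (g : C) {a b : C} (w : g ⊗ a ⟶ g ⊗ b) : ∃ w' : a ⟶ b, g ◁ w' = w := by
  obtain ⟨g₁, ⟨e⟩, ⟨e'⟩⟩ := exists_inv g
  exact exists_whiskerLeft_eq g g₁ e e' w

variable (r : g ⟶ h)

lemma lf_zero {g' h' : C} : LF r (0 : g' ⟶ h') := by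
  obtain ⟨m, ⟨u⟩⟩ := exists_iso_tensorRight g g'
  exact ⟨m, u, 0, by simp⟩

lemma lf_add {g' h' : C} {f₁ f₂ : g' ⟶ h'} (h₁ : LF r f₁) (h₂ : LF r f₂) :
    LF r (f₁ + f₂) := by
  obtain ⟨ℓ₁, u₁, s₁, rfl⟩ := h₁
  obtain ⟨ℓ₂, u₂, s₂, rfl⟩ := h₂
  obtain ⟨w, hw⟩ := exists_wr g (u₁.inv ≫ u₂.hom)
  refine ⟨ℓ₁, u₁, s₁ + (w ▷ h) ≫ s₂, ?_⟩
  simp only [Preadditive.comp_add]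
  congr 1
  rw [whisker_exchange_assoc, hw]
  simp

lemma lf_neg {g' h' : C} {f : g' ⟶ h'} (hf : LF r f) : LF r (-f) := by
  obtain ⟨ℓ, u, s, rfl⟩ := hf
  exact ⟨ℓ, u, -s, by simp⟩

lemma lf_comp_left {g' h' h'' : C} {f : g' ⟶ h'} (hf : LF r f) (s' : h' ⟶ h'') :
    LF r (f ≫ s') := by
  obtain ⟨ℓ, u, s, rfl⟩ := hf
  exact ⟨ℓ, u, s ≫ s', by simp⟩

lemma lf_comp_right {g'' g' h' : C} (t : g'' ⟶ g') {f : g' ⟶ h'} (hf : LF r f) :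
    LF r (t ≫ f) := by
  obtain ⟨ℓ, u, s, rfl⟩ := hf
  obtain ⟨m, ⟨u'⟩⟩ := exists_iso_tensorRight g g''
  obtain ⟨w, hw⟩ := exists_wr g (u'.inv ≫ t ≫ u.hom)
  refine ⟨m, u', (w ▷ h) ≫ s, ?_⟩
  rw [whisker_exchange_assoc, hw]
  simp

lemma lf_whiskerLeft {g' h' : C} (a : C) {f : g' ⟶ h'} (hf : LF r f) :
    LF r (a ◁ f) := by
  obtain ⟨ℓ, u, s, rfl⟩ := hf
  refine ⟨a ⊗ ℓ, whiskerLeftIso a u ≪≫ (α_ a ℓ g).symm, (α_ a ℓ h).hom ≫ (a ◁ s), ?_⟩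
  simp only [Iso.trans_hom, whiskerLeftIso_hom, Iso.symm_hom, Category.assoc,
    MonoidalCategory.whiskerLeft_comp]
  rw [MonoidalCategory.associator_naturality_right_assoc, Iso.inv_hom_id_assoc]

lemma lf_comp_iso_left {g'' g' h' : C} (i : g'' ≅ g') {f : g' ⟶ h'} (hf : LF r f) :
    LF r (i.hom ≫ f) := by
  obtain ⟨ℓ, u, s, rfl⟩ := hf
  exact ⟨ℓ, i ≪≫ u, s, by simp⟩

lemma lf_tensor_left {g' h' a b : C} (x : a ⟶ b) {f : g' ⟶ h'} (hf : LF r f) :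
    LF r (x ⊗ₘ f) := by
  rw [MonoidalCategory.tensorHom_def]
  exact lf_comp_right r (x ▷ g') (lf_whiskerLeft r b hf)

lemma lf_tensor_right {g' h' a b : C} {f : g' ⟶ h'} (x : a ⟶ b) (hf : LF r f) :
    LF r (f ⊗ₘ x) := by
  have key : f ⊗ₘ x = (β_ g' a).hom ≫ (x ⊗ₘ f) ≫ (β_ h' b).inv := by
    rw [← BraidedCategory.braiding_naturality_assoc, Iso.hom_inv_id, Category.comp_id]
  rw [key]
  exact lf_comp_iso_left r (β_ g' a)
    (lf_comp_left r (lf_tensor_left r x hf) (β_ h' b).inv)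

lemma lf_self : LF r r :=
  ⟨𝟙_ C, (λ_ g).symm, (λ_ h).hom, by simp⟩

/-- The principal ideal generated by `r`, described in left normal form. -/
def spanIdeal : HomIdeal C where
  carrier g' h' :=
    { carrier := setOf (LF r)
      add_mem' := fun ha hb => lf_add r ha hb
      zero_mem' := lf_zero r
      neg_mem' := fun ha => lf_neg r ha }
  comp_left := fun {g₀ h₀ h₁} f s hf => lf_comp_left r hf s
  comp_right := fun {g₁ g₀ h₀} t f hf => lf_comp_right r t hf
  tensor_left := fun {g₀ h₀ g₁ h₁} s f hf => lf_tensor_left r s hf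
  tensor_right := fun {g₀ h₀ g₁ h₁} f s hf => lf_tensor_right r s hf

lemma lf_memSpan {g' h' : C} {f : g' ⟶ h'} (hf : LF r f) : MemSpan r f := by
  obtain ⟨ℓ, u, s, rfl⟩ := hf
  intro K hK
  have h1 := K.tensor_left (𝟙 ℓ) r hK
  rw [MonoidalCategory.id_tensorHom] at h1
  exact K.comp_right u.hom _ (K.comp_left _ s h1)

lemma memSpan_lf {g' h' : C} {f : g' ⟶ h'} (hf : MemSpan r f) : LF r f :=
  hf (spanIdeal r) (lf_self r)

lemma lf_rf {g' h' : C} {f : g' ⟶ h'} (hf : LF r f) : RF r f := by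
  obtain ⟨ℓ, u, s, rfl⟩ := hf
  obtain ⟨h₁, ⟨e⟩, ⟨e'⟩⟩ := exists_inv h
  set v : h ⊗ (h₁ ⊗ h') ≅ h' := (α_ h h₁ h').symm ≪≫ whiskerRightIso e h' ≪≫ λ_ h' with hv
  obtain ⟨w, hw⟩ := exists_wl h ((β_ ℓ h).inv ≫ s ≫ v.inv)
  refine ⟨h₁ ⊗ h', u.hom ≫ (β_ ℓ g).hom ≫ (g ◁ w), v, ?_⟩
  rw [Category.assoc, Category.assoc, whisker_exchange_assoc, hw,
    ← BraidedCategory.braiding_naturality_right_assoc]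
  simp

lemma rf_lf {g' h' : C} {f : g' ⟶ h'} (hf : RF r f) : LF r f := by
  obtain ⟨k, t, v, rfl⟩ := hf
  obtain ⟨m, ⟨u⟩⟩ := exists_iso_tensorRight g g'
  obtain ⟨w, hw⟩ := exists_wr g (u.inv ≫ t ≫ (β_ g k).hom)
  refine ⟨m, u, (w ▷ h) ≫ (β_ h k).inv ≫ v.hom, ?_⟩
  rw [whisker_exchange_assoc, hw]
  simp only [Iso.hom_inv_id_assoc, Category.assoc]
  rw [← BraidedCategory.braiding_naturality_left_assoc]
  simp

end SpanLemmas

/-- Explicit description of the principal homogeneous ideal `⟨r⟩`: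
a morphism `f : g' ⟶ h'` lies in `⟨r⟩` iff it has the form `s ∘ (id_ℓ ⊗ r) ∘ u` for an
object `ℓ`, an isomorphism `u : g' ≅ ℓ ⊗ g` and a morphism `s : ℓ ⊗ h ⟶ h'`; and iff it
has the form `v ∘ (r ⊗ id_k) ∘ t` for an object `k`, a morphism `t : g' ⟶ g ⊗ k` and an
isomorphism `v : h ⊗ k ≅ h'`. -/
theorem memSpan_iff
    {C : Type u} [Category.{v} C] [Preadditive C] [MonoidalCategory C]
    [SymmetricCategory C] [MonoidalPreadditive C] [GradedComm2Ring C]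
    {g h : C} (r : g ⟶ h) {g' h' : C} (f : g' ⟶ h') :
    (MemSpan r f ↔
      ∃ (ℓ : C) (u : g' ≅ ℓ ⊗ g) (s : ℓ ⊗ h ⟶ h'), f = u.hom ≫ (ℓ ◁ r) ≫ s) ∧
    (MemSpan r f ↔
      ∃ (k : C) (t : g' ⟶ g ⊗ k) (v : h ⊗ k ≅ h'), f = t ≫ (r ▷ k) ≫ v.hom) :=
  ⟨⟨fun H => memSpan_lf r H, fun H => lf_memSpan r H⟩,
   ⟨fun H => lf_rf r (memSpan_lf r H), fun H => lf_memSpan r (rf_lf r H)⟩⟩
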